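/- Let n ≥ 1 and let m, p be integers with 0 ≤ m < p ≤ n, let d_i ≥ 0 for i = m+1,…,n, let x ∈ {0,1}^n, and let Γ ≥ 1 be a real number. Write (y)_+ = max(y,0) and define g : [0,∞)² → ℝ by g(α,β) = α·Γ − β + Σ_{i=m+1}^{p} [ x_i·(d_i + β − α)_+ + (1 − x_i)·(β − α)_+ ] + Σ_{i=p+1}^{n} x_i·(d_i − α)_+. Let A = { d_i : m+1 ≤ i ≤ n } ∪ {0} and P = (A × {0}) ∪ { (α,α) : α ∈ A } ∪ { (α, (α − d_i)_+) : α ∈ A, m+1 ≤ i ≤ p }. Then g is bounded below on [0,∞)², its infimum over [0,∞)² is attained, and inf_{(α,β)∈[0,∞)²} g(α,β) = min_{(α,β)∈P} g(α,β). -/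
import Mathlib


open Finset

/-- The finite set `A = { d i : m+1 ≤ i ≤ n } ∪ {0}` of candidate dual values
(indices are `1`-based in the paper, `0`-based here). -/
noncomputable def kinkA (n m : ℕ) (d : Fin n → ℝ) : Finset ℝ :=
  insert (0 : ℝ) ((Finset.univ.filter fun i : Fin n => m ≤ i.val).image d)

/-- The finite set `P` of kinkpoints
`(A × {0}) ∪ { (α,α) : α ∈ A } ∪ { (α, (α - d i)₊) : α ∈ A, m+1 ≤ i ≤ p }`. -/
noncomputable def kinkP (n m p : ℕ) (d : Fin n → ℝ) : Finset (ℝ × ℝ) :=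
  (kinkA n m d ×ˢ {(0 : ℝ)}) ∪ (kinkA n m d).image (fun α => (α, α)) ∪
    ((kinkA n m d ×ˢ
        (Finset.univ.filter fun i : Fin n => m ≤ i.val ∧ i.val < p)).image
      fun q => (q.1, max (q.1 - d q.2) 0))

lemma kinkP_nonempty (n m p : ℕ) (d : Fin n → ℝ) : (kinkP n m p d).Nonempty := by
  refine ⟨((0 : ℝ), (0 : ℝ)), ?_⟩
  unfold kinkP kinkA
  simp

lemma lemA {ι : Type*} (s : Finset ι) (w e : ι → ℝ) (hw : ∀ i ∈ s, 0 ≤ w i)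
    (c : ℝ) (hc : 0 ≤ c + ∑ i ∈ s, w i) (t : ℝ) (ht : 0 ≤ t) :
    ∃ t', 0 ≤ t' ∧ (t' = 0 ∨ ∃ i ∈ s, t' = max (e i) 0) ∧
      c * t' + ∑ i ∈ s, w i * max (t' - e i) 0 ≤
        c * t + ∑ i ∈ s, w i * max (t - e i) 0 := by
  classical
  set S := s.filter (fun i => e i < t) with hS
  set T := s.filter (fun i => ¬ e i < t) with hT
  have hsplit : ∀ u : ℝ, (∀ i ∈ S, e i ≤ u) → (∀ i ∈ T, u ≤ e i) →
      ∑ i ∈ s, w i * max (u - e i) 0 = ∑ i ∈ S, w i * (u - e i) := by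
    intro u h1 h2
    rw [← Finset.sum_filter_add_sum_filter_not s (fun i => e i < t)]
    rw [show (Finset.filter (fun i => ¬ e i < t) s) = T from rfl,
        show (Finset.filter (fun i => e i < t) s) = S from rfl]
    have hz : ∑ i ∈ T, w i * max (u - e i) 0 = 0 :=
      Finset.sum_eq_zero fun i hi => by
        rw [max_eq_right (by linarith [h2 i hi])]; ring
    rw [hz, add_zero]
    exact Finset.sum_congr rfl fun i hi => by
      rw [max_eq_left (by linarith [h1 i hi])]
  have key : ∀ u v : ℝ, ∑ i ∈ S, w i * (u - e i) =
      (∑ i ∈ S, w i * (v - e i)) + (∑ i ∈ S, w i) * (u - v) := by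
    intro u v
    rw [Finset.sum_mul, ← Finset.sum_add_distrib]
    exact Finset.sum_congr rfl fun i _ => by ring
  have hSsub : ∀ i ∈ S, i ∈ s := fun i hi => (Finset.mem_filter.1 hi).1
  have hSlt : ∀ i ∈ S, e i < t := fun i hi => (Finset.mem_filter.1 hi).2
  have hTge : ∀ i ∈ T, t ≤ e i := fun i hi => le_of_not_gt (Finset.mem_filter.1 hi).2
  rcases le_or_gt 0 (c + ∑ i ∈ S, w i) with hσ | hσ
  · -- move left to t'
    set cand := insert (0:ℝ) (S.image fun i => max (e i) 0) with hcand
    have hne : cand.Nonempty := ⟨0, Finset.mem_insert_self _ _⟩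
    set t' := cand.max' hne with ht'
    have ht'0 : 0 ≤ t' := Finset.le_max' _ _ (Finset.mem_insert_self _ _)
    have ht'le : t' ≤ t := by
      apply Finset.max'_le
      intro y hy
      rcases Finset.mem_insert.1 hy with rfl | hy
      · exact ht
      · obtain ⟨i, hi, rfl⟩ := Finset.mem_image.1 hy
        exact max_le (le_of_lt (hSlt i hi)) ht
    have hget' : ∀ i ∈ S, e i ≤ t' := by
      intro i hi
      have hm : max (e i) 0 ∈ cand :=
        Finset.mem_insert_of_mem (Finset.mem_image_of_mem _ hi)
      exact le_trans (le_max_left _ _) (Finset.le_max' _ _ hm)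
    refine ⟨t', ht'0, ?_, ?_⟩
    · rcases Finset.mem_insert.1 (Finset.max'_mem cand hne) with h | h
      · exact Or.inl h
      · obtain ⟨i, hi, hh⟩ := Finset.mem_image.1 h
        exact Or.inr ⟨i, hSsub i hi, hh.symm⟩
    · rw [hsplit t (fun i hi => le_of_lt (hSlt i hi)) hTge,
          hsplit t' hget' (fun i hi => le_trans ht'le (hTge i hi)),
          key t t']
      nlinarith [mul_nonneg hσ (sub_nonneg.2 ht'le)]
  · -- move right to t'
    have hTne : T.Nonempty := by
      by_contra h
      rw [Finset.not_nonempty_iff_eq_empty] at h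
      have := Finset.sum_filter_add_sum_filter_not s (fun i => e i < t) w
      rw [show (Finset.filter (fun i => ¬ e i < t) s) = T from rfl,
          show (Finset.filter (fun i => e i < t) s) = S from rfl, h,
          Finset.sum_empty, add_zero] at this
      rw [← this] at hc
      linarith
    have hne : (T.image e).Nonempty := hTne.image e
    set t' := (T.image e).min' hne with ht'
    obtain ⟨i₀, hi₀, hi₀e⟩ := Finset.mem_image.1 (Finset.min'_mem _ hne)
    have htt' : t ≤ t' := by rw [ht', ← hi₀e]; exact hTge i₀ hi₀
    have he0 : t' = e i₀ := by rw [ht', hi₀e]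
    have he0' : (0:ℝ) ≤ e i₀ := by rw [← he0]; exact le_trans ht htt'
    have ht'le : ∀ i ∈ T, t' ≤ e i := fun i hi =>
      Finset.min'_le _ _ (Finset.mem_image_of_mem _ hi)
    refine ⟨t', le_trans ht htt', Or.inr ⟨i₀, (Finset.mem_filter.1 hi₀).1,
      by rw [he0, max_eq_left he0']⟩, ?_⟩
    · rw [hsplit t (fun i hi => le_of_lt (hSlt i hi)) hTge,
          hsplit t' (fun i hi => le_trans (le_of_lt (hSlt i hi)) htt') ht'le,
          key t' t]
      nlinarith [mul_nonpos_of_nonpos_of_nonneg (le_of_lt hσ) (sub_nonneg.2 htt')]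

lemma lemB {ι : Type*} (s : Finset ι) (w e : ι → ℝ)
    (c : ℝ) (hc : 0 ≤ c) (L t : ℝ) (ht : L ≤ t) :
    ∃ t', L ≤ t' ∧ (t' = L ∨ ∃ i ∈ s, t' = max (e i) L) ∧
      c * t' + ∑ i ∈ s, w i * max (e i - t') 0 ≤
        c * t + ∑ i ∈ s, w i * max (e i - t) 0 := by
  classical
  set S := s.filter (fun i => t < e i) with hS
  set T := s.filter (fun i => ¬ t < e i) with hT
  have hsplit : ∀ u : ℝ, (∀ i ∈ S, u ≤ e i) → (∀ i ∈ T, e i ≤ u) →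
      ∑ i ∈ s, w i * max (e i - u) 0 = ∑ i ∈ S, w i * (e i - u) := by
    intro u h1 h2
    rw [← Finset.sum_filter_add_sum_filter_not s (fun i => t < e i)]
    rw [show (Finset.filter (fun i => ¬ t < e i) s) = T from rfl,
        show (Finset.filter (fun i => t < e i) s) = S from rfl]
    have hz : ∑ i ∈ T, w i * max (e i - u) 0 = 0 :=
      Finset.sum_eq_zero fun i hi => by
        rw [max_eq_right (by linarith [h2 i hi])]; ring
    rw [hz, add_zero]
    exact Finset.sum_congr rfl fun i hi => by
      rw [max_eq_left (by linarith [h1 i hi])]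
  have key : ∀ u v : ℝ, ∑ i ∈ S, w i * (e i - u) =
      (∑ i ∈ S, w i * (e i - v)) + (∑ i ∈ S, w i) * (v - u) := by
    intro u v
    rw [Finset.sum_mul, ← Finset.sum_add_distrib]
    exact Finset.sum_congr rfl fun i _ => by ring
  have hSgt : ∀ i ∈ S, t < e i := fun i hi => (Finset.mem_filter.1 hi).2
  have hTle : ∀ i ∈ T, e i ≤ t := fun i hi => le_of_not_gt (Finset.mem_filter.1 hi).2
  rcases le_or_gt (∑ i ∈ S, w i) c with hσ | hσ
  · -- slope nonneg: move left to t'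
    set cand := insert L (T.image fun i => max (e i) L) with hcand
    have hne : cand.Nonempty := ⟨L, Finset.mem_insert_self _ _⟩
    set t' := cand.max' hne with ht'
    have ht'L : L ≤ t' := Finset.le_max' _ _ (Finset.mem_insert_self _ _)
    have ht'le : t' ≤ t := by
      apply Finset.max'_le
      intro y hy
      rcases Finset.mem_insert.1 hy with rfl | hy
      · exact ht
      · obtain ⟨i, hi, rfl⟩ := Finset.mem_image.1 hy
        exact max_le (hTle i hi) ht
    have hget' : ∀ i ∈ T, e i ≤ t' := by
      intro i hi
      have hm : max (e i) L ∈ cand :=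
        Finset.mem_insert_of_mem (Finset.mem_image_of_mem _ hi)
      exact le_trans (le_max_left _ _) (Finset.le_max' _ _ hm)
    refine ⟨t', ht'L, ?_, ?_⟩
    · rcases Finset.mem_insert.1 (Finset.max'_mem cand hne) with h | h
      · exact Or.inl h
      · obtain ⟨i, hi, hh⟩ := Finset.mem_image.1 h
        exact Or.inr ⟨i, (Finset.mem_filter.1 hi).1, hh.symm⟩
    · rw [hsplit t (fun i hi => le_of_lt (hSgt i hi)) hTle,
          hsplit t' (fun i hi => le_trans ht'le (le_of_lt (hSgt i hi))) hget',
          key t' t]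
      nlinarith [mul_nonneg (sub_nonneg.2 hσ) (sub_nonneg.2 ht'le)]
  · -- slope negative: move right to the nearest kink above
    have hSne : S.Nonempty := by
      by_contra h
      rw [Finset.not_nonempty_iff_eq_empty] at h
      rw [h, Finset.sum_empty] at hσ
      linarith
    have hne : (S.image e).Nonempty := hSne.image e
    set t' := (S.image e).min' hne with ht'
    obtain ⟨i₀, hi₀, hi₀e⟩ := Finset.mem_image.1 (Finset.min'_mem _ hne)
    have htt' : t ≤ t' := by rw [ht', ← hi₀e]; exact le_of_lt (hSgt i₀ hi₀)
    have he0 : t' = e i₀ := by rw [ht', hi₀e]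
    have he0' : L ≤ e i₀ := by rw [← he0]; exact le_trans ht htt'
    have ht'le : ∀ i ∈ S, t' ≤ e i := fun i hi =>
      Finset.min'_le _ _ (Finset.mem_image_of_mem _ hi)
    refine ⟨t', le_trans ht htt', Or.inr ⟨i₀, (Finset.mem_filter.1 hi₀).1,
      by rw [he0, max_eq_left he0']⟩, ?_⟩
    · rw [hsplit t (fun i hi => le_of_lt (hSgt i hi)) hTle,
          hsplit t' ht'le (fun i hi => le_trans (hTle i hi) htt'),
          key t' t]
      nlinarith [mul_nonpos_of_nonpos_of_nonneg (sub_nonpos.2 hσ.le) (sub_nonneg.2 htt')]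

section
variable {n m p : ℕ} {d x : Fin n → ℝ} {Γ : ℝ}

/-- stand-ins for S1, S2 -/
def Sone (n m p : ℕ) : Finset (Fin n) := Finset.univ.filter fun i => m ≤ i.val ∧ i.val < p
def Stwo (n p : ℕ) : Finset (Fin n) := Finset.univ.filter fun i : Fin n => p ≤ i.val

noncomputable def gobj (n m p : ℕ) (d x : Fin n → ℝ) (Γ : ℝ) : ℝ × ℝ → ℝ := fun q =>
  q.1 * Γ - q.2 +
    (∑ i ∈ Sone n m p, (x i * max (d i + q.2 - q.1) 0 + (1 - x i) * max (q.2 - q.1) 0)) +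
    ∑ i ∈ Stwo n p, x i * max (d i - q.1) 0

lemma mem_kinkA_zero : (0:ℝ) ∈ kinkA n m d := Finset.mem_insert_self _ _

lemma mem_kinkA_d (i : Fin n) (hi : m ≤ i.val) : d i ∈ kinkA n m d :=
  Finset.mem_insert_of_mem (Finset.mem_image_of_mem d (by simp [hi]))

lemma kinkA_nonneg (hd : ∀ i : Fin n, m ≤ i.val → 0 ≤ d i)
    {a : ℝ} (ha : a ∈ kinkA n m d) : 0 ≤ a := by
  rcases Finset.mem_insert.1 ha with rfl | h
  · exact le_refl 0
  · obtain ⟨i, hi, rfl⟩ := Finset.mem_image.1 h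
    exact hd i (by simpa using (Finset.mem_filter.1 hi).2)

lemma Sone_nonneg (hd : ∀ i : Fin n, m ≤ i.val → 0 ≤ d i) {i : Fin n}
    (hi : i ∈ Sone n m p) : 0 ≤ d i := hd i (Finset.mem_filter.1 hi).2.1

lemma Sone_card_pos (hmp : m < p) (hpn : p ≤ n) : 1 ≤ (Sone n m p).card :=
  Finset.card_pos.2 ⟨⟨m, lt_of_lt_of_le hmp hpn⟩, by
    simp [Sone, Finset.mem_filter, hmp]⟩

/-- the α = 0 case -/
lemma caseA0 (hmp : m < p) (hpn : p ≤ n)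
    (hd : ∀ i : Fin n, m ≤ i.val → 0 ≤ d i) {β : ℝ} (hβ : 0 ≤ β) :
    gobj n m p d x Γ (0, 0) ≤ gobj n m p d x Γ (0, β) := by
  have hcard : 1 ≤ (Sone n m p).card := Sone_card_pos hmp hpn
  have hcard' : (1:ℝ) ≤ ((Sone n m p).card : ℝ) := by exact_mod_cast hcard
  unfold gobj
  simp only
  have e1 : (∑ i ∈ Sone n m p,
      (x i * max (d i + β - 0) 0 + (1 - x i) * max (β - 0) 0)) =
      (∑ i ∈ Sone n m p, x i * d i) + ((Sone n m p).card : ℝ) * β := by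
    rw [show (∑ i ∈ Sone n m p, x i * d i) + ((Sone n m p).card : ℝ) * β
        = ∑ i ∈ Sone n m p, (x i * d i + β) from by
      rw [Finset.sum_add_distrib, Finset.sum_const, nsmul_eq_mul]]
    refine Finset.sum_congr rfl fun i hi => ?_
    have hdi : 0 ≤ d i := Sone_nonneg hd hi
    rw [show d i + β - 0 = d i + β from by ring, show β - 0 = β from by ring,
        max_eq_left (by linarith), max_eq_left hβ]
    ring
  have e2 : (∑ i ∈ Sone n m p,
      (x i * max (d i + 0 - 0) 0 + (1 - x i) * max ((0:ℝ) - 0) 0)) =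
      ∑ i ∈ Sone n m p, x i * d i := by
    refine Finset.sum_congr rfl fun i hi => ?_
    have hdi : 0 ≤ d i := Sone_nonneg hd hi
    rw [show d i + 0 - 0 = d i from by ring, show (0:ℝ) - 0 = 0 from by ring,
        max_eq_left hdi, max_self]
    ring
  rw [e1, e2]
  have : β ≤ ((Sone n m p).card : ℝ) * β := le_mul_of_one_le_left hβ hcard'
  linarith

end

section
variable {n m p : ℕ} {d x : Fin n → ℝ} {Γ : ℝ}

lemma Sone_Stwo_disj : Disjoint (Sone n m p) (Stwo n p) := by
  rw [Finset.disjoint_left]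
  intro i hi1 hi2
  have h1 := (Finset.mem_filter.1 hi1).2.2
  have h2 := (Finset.mem_filter.1 hi2).2
  omega

/-- the β = 0 case -/
lemma caseB0 (hmp : m < p) (hΓ : 1 ≤ Γ)
    (hd : ∀ i : Fin n, m ≤ i.val → 0 ≤ d i) {α : ℝ} (hα : 0 ≤ α) :
    ∃ a ∈ kinkA n m d, gobj n m p d x Γ (a, 0) ≤ gobj n m p d x Γ (α, 0) := by
  classical
  have form : ∀ u : ℝ, 0 ≤ u → gobj n m p d x Γ (u, 0) =
      Γ * u + ∑ i ∈ (Sone n m p ∪ Stwo n p), x i * max (d i - u) 0 := by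
    intro u hu
    rw [Finset.sum_union Sone_Stwo_disj]
    unfold gobj
    simp only
    have e1 : (∑ i ∈ Sone n m p,
        (x i * max (d i + 0 - u) 0 + (1 - x i) * max ((0:ℝ) - u) 0)) =
        ∑ i ∈ Sone n m p, x i * max (d i - u) 0 := by
      refine Finset.sum_congr rfl fun i hi => ?_
      rw [show d i + 0 - u = d i - u from by ring,
          max_eq_right (by linarith : (0:ℝ) - u ≤ 0)]
      ring
    rw [e1]
    ring
  obtain ⟨t', ht'0, hcand, hle⟩ :=
    lemB (Sone n m p ∪ Stwo n p) x d Γ (by linarith) 0 α hα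
  refine ⟨t', ?_, ?_⟩
  · rcases hcand with rfl | ⟨i, hi, rfl⟩
    · exact mem_kinkA_zero
    · have him : m ≤ i.val := by
        rcases Finset.mem_union.1 hi with h | h
        · exact (Finset.mem_filter.1 h).2.1
        · exact le_trans (Nat.le_of_lt hmp) (Finset.mem_filter.1 h).2
      rw [max_eq_left (hd i him)]
      exact mem_kinkA_d i him
  · rw [form t' ht'0, form α hα]
    exact hle

/-- the α = a ∈ A case -/
lemma caseAa (hmp : m < p) (hpn : p ≤ n)
    (hd : ∀ i : Fin n, m ≤ i.val → 0 ≤ d i)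
    (hx : ∀ i, x i = 0 ∨ x i = 1)
    {a : ℝ} (ha : 0 ≤ a) {β : ℝ} (hβ : 0 ≤ β) :
    ∃ b, 0 ≤ b ∧ (b = 0 ∨ b = a ∨ ∃ i ∈ Sone n m p, b = max (a - d i) 0) ∧
      gobj n m p d x Γ (a, b) ≤ gobj n m p d x Γ (a, β) := by
  classical
  set W : Fin n × Bool → ℝ := fun q => if q.2 then x q.1 else 1 - x q.1 with hW
  set E : Fin n × Bool → ℝ := fun q => if q.2 then a - d q.1 else a with hE
  have form : ∀ b : ℝ, gobj n m p d x Γ (a, b) =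
      (-1) * b + (∑ q ∈ Sone n m p ×ˢ (Finset.univ : Finset Bool),
          W q * max (b - E q) 0)
      + (a * Γ + ∑ i ∈ Stwo n p, x i * max (d i - a) 0) := by
    intro b
    unfold gobj
    simp only
    rw [Finset.sum_product]
    have e1 : ∀ i ∈ Sone n m p,
        (∑ u : Bool, W (i, u) * max (b - E (i, u)) 0) =
          x i * max (d i + b - a) 0 + (1 - x i) * max (b - a) 0 := by
      intro i _
      rw [Fintype.sum_bool, show W (i, true) = x i from rfl,
          show W (i, false) = 1 - x i from rfl,
          show E (i, true) = a - d i from rfl,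
          show E (i, false) = a from rfl,
          show b - (a - d i) = d i + b - a from by ring]
    rw [Finset.sum_congr rfl e1]
    ring
  have hsum : ∑ q ∈ Sone n m p ×ˢ (Finset.univ : Finset Bool), W q
      = ((Sone n m p).card : ℝ) := by
    rw [Finset.sum_product]
    have e1 : ∀ i ∈ Sone n m p, (∑ u : Bool, W (i, u)) = 1 := by
      intro i _
      rw [Fintype.sum_bool, show W (i, true) = x i from rfl,
          show W (i, false) = 1 - x i from rfl]
      ring
    rw [Finset.sum_congr rfl e1, Finset.sum_const, nsmul_eq_mul, mul_one]
  have hcard : (1:ℝ) ≤ ((Sone n m p).card : ℝ) := by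
    exact_mod_cast Sone_card_pos hmp hpn
  obtain ⟨t', ht'0, hcand, hle⟩ :=
    lemA (Sone n m p ×ˢ (Finset.univ : Finset Bool)) W E
      (by
        rintro ⟨i, u⟩ _
        cases u
        · show (0:ℝ) ≤ 1 - x i
          rcases hx i with h | h <;> rw [h] <;> norm_num
        · show (0:ℝ) ≤ x i
          rcases hx i with h | h <;> rw [h] <;> norm_num)
      (-1) (by rw [hsum]; linarith) β hβ
  refine ⟨t', ht'0, ?_, ?_⟩
  · rcases hcand with rfl | ⟨⟨i, u⟩, hq, rfl⟩
    · exact Or.inl rfl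
    · have hi : i ∈ Sone n m p := (Finset.mem_product.1 hq).1
      cases u
      · refine Or.inr (Or.inl ?_)
        rw [show E (i, false) = a from rfl]
        exact max_eq_left ha
      · refine Or.inr (Or.inr ⟨i, hi, ?_⟩)
        rw [show E (i, true) = a - d i from rfl]
  · rw [form t', form β]
    linarith [hle]

end

section
variable {n m p : ℕ} {d x : Fin n → ℝ} {Γ : ℝ}

lemma memP1 {a : ℝ} (ha : a ∈ kinkA n m d) : (a, (0:ℝ)) ∈ kinkP n m p d :=
  Finset.mem_union_left _ (Finset.mem_union_left _
    (Finset.mem_product.2 ⟨ha, Finset.mem_singleton_self 0⟩))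

lemma memP2 {a : ℝ} (ha : a ∈ kinkA n m d) : (a, a) ∈ kinkP n m p d :=
  Finset.mem_union_left _ (Finset.mem_union_right _ (Finset.mem_image_of_mem _ ha))

lemma memP3 {a : ℝ} (ha : a ∈ kinkA n m d) {i : Fin n} (hi : i ∈ Sone n m p) :
    (a, max (a - d i) 0) ∈ kinkP n m p d :=
  Finset.mem_union_right _ (Finset.mem_image.2
    ⟨(a, i), Finset.mem_product.2 ⟨ha, hi⟩, rfl⟩)

lemma caseAa_P (hmp : m < p) (hpn : p ≤ n)
    (hd : ∀ i : Fin n, m ≤ i.val → 0 ≤ d i)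
    (hx : ∀ i, x i = 0 ∨ x i = 1)
    {a : ℝ} (ha : a ∈ kinkA n m d) {β : ℝ} (hβ : 0 ≤ β) :
    ∃ q' ∈ kinkP n m p d, gobj n m p d x Γ q' ≤ gobj n m p d x Γ (a, β) := by
  obtain ⟨b, hb0, hbc, hble⟩ := caseAa (Γ := Γ) hmp hpn hd hx (kinkA_nonneg hd ha) hβ
  refine ⟨(a, b), ?_, hble⟩
  rcases hbc with rfl | rfl | ⟨i, hi, rfl⟩
  · exact memP1 ha
  · exact memP2 ha
  · exact memP3 ha hi

lemma keyLemma (hmp : m < p) (hpn : p ≤ n)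
    (hd : ∀ i : Fin n, m ≤ i.val → 0 ≤ d i)
    (hx : ∀ i, x i = 0 ∨ x i = 1) (hΓ : 1 ≤ Γ)
    {α β : ℝ} (hα : 0 ≤ α) (hβ : 0 ≤ β) :
    ∃ q' ∈ kinkP n m p d, gobj n m p d x Γ q' ≤ gobj n m p d x Γ (α, β) := by
  classical
  have hmin : 0 ≤ min α β := le_min hα hβ
  have gdiag : ∀ t : ℝ, gobj n m p d x Γ (α + t, β + t) =
      ((Γ - 1) * t + ∑ i ∈ Stwo n p, x i * max (d i - α - t) 0)
      + (α * Γ - β + ∑ i ∈ Sone n m p,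
          (x i * max (d i + β - α) 0 + (1 - x i) * max (β - α) 0)) := by
    intro t
    unfold gobj
    simp only
    have e1 : (∑ i ∈ Sone n m p, (x i * max (d i + (β + t) - (α + t)) 0
        + (1 - x i) * max ((β + t) - (α + t)) 0)) =
        ∑ i ∈ Sone n m p, (x i * max (d i + β - α) 0 + (1 - x i) * max (β - α) 0) :=
      Finset.sum_congr rfl fun i _ => by
        rw [show d i + (β + t) - (α + t) = d i + β - α from by ring,
            show (β + t) - (α + t) = β - α from by ring]
    have e2 : (∑ i ∈ Stwo n p, x i * max (d i - (α + t)) 0) =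
        ∑ i ∈ Stwo n p, x i * max (d i - α - t) 0 :=
      Finset.sum_congr rfl fun i _ => by
        rw [show d i - (α + t) = d i - α - t from by ring]
    rw [e1, e2]
    ring
  obtain ⟨t', hL, hcand, hle⟩ :=
    lemB (Stwo n p) x (fun i => d i - α) (Γ - 1) (by linarith) (-(min α β)) 0
      (by linarith)
  have h1 : gobj n m p d x Γ (α + t', β + t') ≤ gobj n m p d x Γ (α, β) := by
    have h0 := gdiag 0
    have h2 := gdiag t'
    rw [add_zero, add_zero] at h0
    linarith [hle, h0, h2]
  have hcand' : t' = -(min α β) ∨ ∃ i ∈ Stwo n p, t' = d i - α := by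
    rcases hcand with h | ⟨i, hi, h⟩
    · exact Or.inl h
    · rcases le_total (d i - α) (-(min α β)) with hc1 | hc1
      · rw [max_eq_right hc1] at h
        exact Or.inl h
      · rw [max_eq_left hc1] at h
        exact Or.inr ⟨i, hi, h⟩
  rcases hcand' with rfl | ⟨i, hi, rfl⟩
  · rcases le_total α β with hab | hab
    · rw [min_eq_left hab] at h1
      rw [show α + -α = (0:ℝ) from by ring,
          show β + -α = β - α from by ring] at h1
      have hba : (0:ℝ) ≤ β - α := by linarith
      exact ⟨(0, 0), memP1 mem_kinkA_zero,
        le_trans (caseA0 hmp hpn hd hba) h1⟩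
    · rw [min_eq_right hab] at h1
      rw [show β + -β = (0:ℝ) from by ring,
          show α + -β = α - β from by ring] at h1
      obtain ⟨a, haA, hale⟩ :=
        caseB0 (x := x) hmp hΓ hd (show (0:ℝ) ≤ α - β by linarith)
      exact ⟨(a, 0), memP1 haA, le_trans hale h1⟩
  · rw [show α + (d i - α) = d i from by ring] at h1
    have him : m ≤ i.val := le_trans hmp.le (Finset.mem_filter.1 hi).2
    have hb' : 0 ≤ β + (d i - α) := by
      have h3 : min α β ≤ β := min_le_right _ _
      linarith [hL]
    obtain ⟨q', hq', hqle⟩ := caseAa_P hmp hpn hd hx (mem_kinkA_d i him) hb'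
    exact ⟨q', hq', le_trans hqle h1⟩

end

/-- the dual objective `g` is bounded below on the nonnegative
quadrant, attains its infimum there, and its infimum equals the minimum of `g`
over the finite set `P` of kinkpoints. -/
theorem dual_objective_min_at_kinkpoints (n m p : ℕ) (hn : 1 ≤ n)
    (hmp : m < p) (hpn : p ≤ n)
    (d : Fin n → ℝ) (hd : ∀ i : Fin n, m ≤ i.val → 0 ≤ d i)
    (x : Fin n → ℝ) (hx : ∀ i, x i = 0 ∨ x i = 1)
    (Γ : ℝ) (hΓ : 1 ≤ Γ) :
    let g : ℝ × ℝ → ℝ := fun q =>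
      q.1 * Γ - q.2 +
        (∑ i ∈ Finset.univ.filter fun i : Fin n => m ≤ i.val ∧ i.val < p,
          (x i * max (d i + q.2 - q.1) 0 + (1 - x i) * max (q.2 - q.1) 0)) +
        ∑ i ∈ Finset.univ.filter fun i : Fin n => p ≤ i.val,
          x i * max (d i - q.1) 0
    let Q : Set (ℝ × ℝ) := {q | 0 ≤ q.1 ∧ 0 ≤ q.2}
    BddBelow (g '' Q) ∧
    (∃ q ∈ Q, ∀ q' ∈ Q, g q ≤ g q') ∧
    sInf (g '' Q) = (kinkP n m p d).inf' (kinkP_nonempty n m p d) g := by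
  intro g Q
  have hg : g = gobj n m p d x Γ := rfl
  have hQ : ∀ q : ℝ × ℝ, q ∈ Q ↔ (0 ≤ q.1 ∧ 0 ≤ q.2) := fun q => Iff.rfl
  have hPQ : ∀ q' ∈ kinkP n m p d, q' ∈ Q := by
    intro q' hq'
    rw [hQ]
    unfold kinkP at hq'
    rcases Finset.mem_union.1 hq' with h | h
    · rcases Finset.mem_union.1 h with h | h
      · obtain ⟨h1, h2⟩ := Finset.mem_product.1 h
        exact ⟨kinkA_nonneg hd h1, le_of_eq (Finset.mem_singleton.1 h2).symm⟩
      · obtain ⟨a, haA, heq⟩ := Finset.mem_image.1 h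
        rw [← heq]
        exact ⟨kinkA_nonneg hd haA, kinkA_nonneg hd haA⟩
    · obtain ⟨⟨a, i⟩, hmem, heq⟩ := Finset.mem_image.1 h
      rw [← heq]
      exact ⟨kinkA_nonneg hd (Finset.mem_product.1 hmem).1, le_max_right _ _⟩
  have key : ∀ q ∈ Q, ∃ q' ∈ kinkP n m p d, g q' ≤ g q := by
    intro q hq
    obtain ⟨q', hq', hle⟩ :=
      keyLemma hmp hpn hd hx hΓ ((hQ q).1 hq).1 ((hQ q).1 hq).2
    exact ⟨q', hq', by rw [hg]; exact hle⟩
  obtain ⟨q₀, hq₀P, hq₀eq⟩ := Finset.exists_mem_eq_inf' (kinkP_nonempty n m p d) g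
  have hlow : ∀ y ∈ g '' Q, (kinkP n m p d).inf' (kinkP_nonempty n m p d) g ≤ y := by
    rintro y ⟨q, hq, rfl⟩
    obtain ⟨q', hq', hle⟩ := key q hq
    exact le_trans (Finset.inf'_le g hq') hle
  refine ⟨⟨_, fun y hy => hlow y hy⟩, ⟨q₀, hPQ q₀ hq₀P, ?_⟩, ?_⟩
  · intro q' hq'
    obtain ⟨q'', hq'', hle⟩ := key q' hq'
    calc g q₀ = _ := hq₀eq.symm
      _ ≤ g q'' := Finset.inf'_le g hq''
      _ ≤ g q' := hle
  · apply le_antisymm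
    · rw [hq₀eq]
      exact csInf_le ⟨_, fun y hy => hlow y hy⟩ ⟨q₀, hPQ q₀ hq₀P, rfl⟩
    · exact le_csInf ⟨g q₀, ⟨q₀, hPQ q₀ hq₀P, rfl⟩⟩ hlow
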